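/- If M is a real maximal ideal of C(X), then Z[M_B] = {Z(f) : f ∈ M_B} has the countable intersection property; consequently M_B is a real maximal ideal of B₁(X). -/

import Mathlib

open Filter Topology

def CFun (X : Type*) [TopologicalSpace X] : Subring (X → ℝ) where
  carrier := {f | Continuous f}
  one_mem' := continuous_const
  zero_mem' := continuous_const
  add_mem' := fun hf hg => hf.add hg
  mul_mem' := fun hf hg => hf.mul hg
  neg_mem' := fun hf => hf.neg

def B1 (X : Type*) [TopologicalSpace X] : Subring (X → ℝ) where
  carrier := {f | ∃ u : ℕ → C(X, ℝ), ∀ x, Tendsto (fun n => u n x) atTop (𝓝 (f x))}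
  one_mem' := ⟨fun _ => 1, fun _ => tendsto_const_nhds⟩
  zero_mem' := ⟨fun _ => 0, fun _ => tendsto_const_nhds⟩
  add_mem' := by
    rintro f g ⟨u, hu⟩ ⟨v, hv⟩
    exact ⟨fun n => u n + v n, fun x => (hu x).add (hv x)⟩
  mul_mem' := by
    rintro f g ⟨u, hu⟩ ⟨v, hv⟩
    exact ⟨fun n => u n * v n, fun x => (hu x).mul (hv x)⟩
  neg_mem' := by
    rintro f ⟨u, hu⟩
    exact ⟨fun n => -u n, fun x => (hu x).neg⟩

theorem CFun_le_B1 (X : Type*) [TopologicalSpace X] : CFun X ≤ B1 X :=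
  fun f hf => ⟨fun _ => ⟨f, hf⟩, fun _ => tendsto_const_nhds⟩

def inclB (X : Type*) [TopologicalSpace X] : CFun X →+* B1 X :=
  Subring.inclusion (CFun_le_B1 X)

def idealB {X : Type*} [TopologicalSpace X] (I : Ideal (CFun X)) : Set (B1 X) :=
  {f | ∃ u : ℕ → CFun X, (∀ n, u n ∈ I) ∧
    ∀ x, Tendsto (fun n => (u n : X → ℝ) x) atTop (𝓝 ((f : X → ℝ) x))}

def IsRealMax {X : Type*} [TopologicalSpace X] (M : Ideal (CFun X)) : Prop :=
  M.IsMaximal ∧ Nonempty ((CFun X ⧸ M) ≃+* ℝ)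

def IsRealMaxB {X : Type*} [TopologicalSpace X] (M : Ideal (B1 X)) : Prop :=
  M.IsMaximal ∧ Nonempty ((B1 X ⧸ M) ≃+* ℝ)

def evalC {X : Type*} [TopologicalSpace X] (p : X) : CFun X →+* ℝ :=
  (Pi.evalRingHom (fun _ => ℝ) p).comp (CFun X).subtype

def evalB {X : Type*} [TopologicalSpace X] (p : X) : B1 X →+* ℝ :=
  (Pi.evalRingHom (fun _ => ℝ) p).comp (B1 X).subtype

def constB1 {X : Type*} [TopologicalSpace X] (r : ℝ) : B1 X :=
  ⟨fun _ => r, ⟨fun _ => ContinuousMap.const X r, fun _ => tendsto_const_nhds⟩⟩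

section AuxRealMax

variable {X : Type*} [TopologicalSpace X]

/-- Constant continuous function. -/
def constC (X : Type*) [TopologicalSpace X] (r : ℝ) : CFun X :=
  ⟨fun _ => r, continuous_const⟩

lemma phi_nonneg (φ : CFun X →+* ℝ) (f : CFun X) (hf : ∀ x, 0 ≤ (f : X → ℝ) x) :
    0 ≤ φ f := by
  have hs : Continuous fun x => Real.sqrt ((f : X → ℝ) x) :=
    Real.continuous_sqrt.comp f.2
  set s : CFun X := ⟨fun x => Real.sqrt ((f : X → ℝ) x), hs⟩ with hsdef
  have hss : s * s = f := Subtype.ext (funext fun x => Real.mul_self_sqrt (hf x))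
  calc (0:ℝ) ≤ φ s * φ s := mul_self_nonneg _
    _ = φ f := by rw [← map_mul, hss]

lemma phi_mono (φ : CFun X →+* ℝ) (f g : CFun X)
    (h : ∀ x, (f : X → ℝ) x ≤ (g : X → ℝ) x) : φ f ≤ φ g := by
  have h0 := phi_nonneg φ (g - f) (fun x => by
    have : ((g - f : CFun X) : X → ℝ) x = (g : X → ℝ) x - (f : X → ℝ) x := rfl
    rw [this]; linarith [h x])
  have h2 : φ (g - f) = φ g - φ f := map_sub φ g f
  linarith [h2 ▸ h0]

lemma phi_const (φ : CFun X →+* ℝ) (r : ℝ) : φ (constC X r) = r := by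
  let c : ℝ →+* CFun X :=
    { toFun := constC X
      map_one' := rfl
      map_mul' := fun _ _ => rfl
      map_zero' := rfl
      map_add' := fun _ _ => rfl }
  have : φ.comp c = RingHom.id ℝ := Subsingleton.elim _ _
  exact congrArg (fun ψ => ψ r) this

/-- The countable intersection property for the kernel of a real-valued ring
homomorphism on `C(X)`. -/
lemma key (φ : CFun X →+* ℝ) (u : ℕ → CFun X)
    (hu : ∀ n, φ (u n) = 0) : ∃ x, ∀ n, (u n : X → ℝ) x = 0 := by
  set t : ℕ → X → ℝ := fun n x => (1/2)^n * min (((u n : X → ℝ) x)^2) 1 with ht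
  have htnn : ∀ n x, 0 ≤ t n x := fun n x => by
    apply mul_nonneg (by positivity)
    exact le_min (sq_nonneg _) zero_le_one
  have htle : ∀ n x, t n x ≤ (1/2:ℝ)^n := fun n x => by
    have : min (((u n : X → ℝ) x)^2) 1 ≤ 1 := min_le_right _ _
    calc t n x ≤ (1/2)^n * 1 := by
          apply mul_le_mul_of_nonneg_left this (by positivity)
      _ = (1/2)^n := mul_one _
  have htc : ∀ n, Continuous (t n) := fun n =>
    continuous_const.mul (((u n).2.pow 2).min continuous_const)
  have hbound : ∀ n x, ‖t n x‖ ≤ (1/2:ℝ)^n := fun n x => by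
    rw [Real.norm_eq_abs, abs_of_nonneg (htnn n x)]; exact htle n x
  have hgc : Continuous fun x => ∑' n, t n x :=
    continuous_tsum htc summable_geometric_two hbound
  set g : CFun X := ⟨fun x => ∑' n, t n x, hgc⟩ with hg
  have hsumm : ∀ x, Summable fun n => t n x := fun x =>
    Summable.of_nonneg_of_le (htnn · x) (htle · x) summable_geometric_two
  set m : ℕ → CFun X := fun n => ⟨t n, htc n⟩ with hm
  have hφm : ∀ n, φ (m n) = 0 := fun n => by
    have h1 : 0 ≤ φ (m n) := phi_nonneg φ (m n) (htnn n)
    have h2 : φ (m n) ≤ φ (constC X ((1/2)^n) * (u n * u n)) := by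
      apply phi_mono
      intro x
      have he : ((constC X ((1/2:ℝ)^n) * (u n * u n) : CFun X) : X → ℝ) x
          = (1/2)^n * ((u n : X → ℝ) x * (u n : X → ℝ) x) := rfl
      rw [he]
      have : min (((u n : X → ℝ) x)^2) 1 ≤ ((u n : X → ℝ) x)^2 := min_le_left _ _
      calc t n x ≤ (1/2)^n * ((u n : X → ℝ) x)^2 :=
            mul_le_mul_of_nonneg_left this (by positivity)
        _ = (1/2)^n * ((u n : X → ℝ) x * (u n : X → ℝ) x) := by ring
    rw [map_mul, map_mul, hu n] at h2
    simp at h2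
    linarith
  have hφg : φ g = 0 := by
    have h1 : 0 ≤ φ g := phi_nonneg φ g (fun x => tsum_nonneg (htnn · x))
    have h2 : ∀ N : ℕ, φ g ≤ (1/2:ℝ)^N * 2 := by
      intro N
      have hle : ∀ x, (g : X → ℝ) x ≤
          ((∑ i ∈ Finset.range N, m i) + constC X ((1/2)^N * 2) : CFun X).1 x := by
        intro x
        have hsplit : ∑ i ∈ Finset.range N, t i x + ∑' i, t (i + N) x = ∑' i, t i x :=
          (hsumm x).sum_add_tsum_nat_add N
        have htail : ∑' i, t (i + N) x ≤ (1/2:ℝ)^N * 2 := by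
          have hs1 : Summable fun i => t (i + N) x :=
            (hsumm x).comp_injective (add_left_injective N)
          have hs2 : Summable fun i : ℕ => (1/2:ℝ)^(i+N) :=
            summable_geometric_two.comp_injective (add_left_injective N)
          calc ∑' i, t (i + N) x ≤ ∑' i : ℕ, (1/2:ℝ)^(i+N) :=
                Summable.tsum_le_tsum (fun i => htle (i+N) x) hs1 hs2
            _ = (1/2:ℝ)^N * 2 := by
                have : ∀ i : ℕ, (1/2:ℝ)^(i+N) = (1/2)^N * (1/2)^i := fun i => by
                  rw [pow_add]; ring
                rw [tsum_congr this, tsum_mul_left, tsum_geometric_two]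
        have hcoe : ((∑ i ∈ Finset.range N, m i) + constC X ((1/2)^N * 2) : CFun X).1 x
            = ∑ i ∈ Finset.range N, t i x + (1/2:ℝ)^N * 2 := by
          have hsum : ((∑ i ∈ Finset.range N, m i : CFun X) : X → ℝ) x
              = ∑ i ∈ Finset.range N, t i x := by
            simp [hm]
          show ((∑ i ∈ Finset.range N, m i : CFun X) : X → ℝ) x + (1/2:ℝ)^N * 2
              = ∑ i ∈ Finset.range N, t i x + (1/2:ℝ)^N * 2
          rw [hsum]
        rw [hcoe]
        show (∑' n, t n x) ≤ _
        rw [← hsplit]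
        linarith [htail]
      have := phi_mono φ g _ hle
      rw [map_add, map_sum, phi_const] at this
      simp only [hφm, Finset.sum_const_zero, zero_add] at this
      exact this
    have htend : Tendsto (fun N : ℕ => (1/2:ℝ)^N * 2) atTop (𝓝 0) := by
      have := tendsto_pow_atTop_nhds_zero_of_lt_one
        (by norm_num : (0:ℝ) ≤ 1/2) (by norm_num)
      simpa using this.mul_const 2
    have := ge_of_tendsto' htend (fun N => h2 N)
    linarith
  have hgz : ∃ x, (g : X → ℝ) x = 0 := by
    by_contra h
    push_neg at h
    have hpos : ∀ x, (0:ℝ) < (g : X → ℝ) x := fun x =>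
      lt_of_le_of_ne (tsum_nonneg (htnn · x)) (Ne.symm (h x))
    have hinv : Continuous fun x => ((g : X → ℝ) x)⁻¹ :=
      g.2.inv₀ (fun x => ne_of_gt (hpos x))
    set gi : CFun X := ⟨fun x => ((g : X → ℝ) x)⁻¹, hinv⟩
    have : g * gi = 1 := Subtype.ext (funext fun x =>
      mul_inv_cancel₀ (ne_of_gt (hpos x)))
    have h1 : φ g * φ gi = 1 := by rw [← map_mul, this, map_one]
    rw [hφg, zero_mul] at h1
    exact zero_ne_one h1
  obtain ⟨x, hx⟩ := hgz
  refine ⟨x, fun n => ?_⟩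
  have hzero : t n x = 0 := by
    have hle' : t n x ≤ ∑' k, t k x := Summable.le_tsum (hsumm x) n (fun k _ => htnn k x)
    have hx0 : (∑' k, t k x) = 0 := hx
    linarith [htnn n x, hx0 ▸ hle']
  have hmin : min (((u n : X → ℝ) x)^2) 1 = 0 := by
    have h2 : (1/2:ℝ)^n ≠ 0 := by positivity
    exact (mul_eq_zero.mp hzero).resolve_left h2
  have : ((u n : X → ℝ) x)^2 = 0 := by
    rcases min_eq_iff.mp hmin with ⟨h, _⟩ | ⟨h, _⟩
    · exact h
    · linarith
  exact pow_eq_zero_iff (two_ne_zero) |>.mp this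

/-- `idealB M` is an ideal of `B1 X`. -/
def JB (M : Ideal (CFun X)) : Ideal (B1 X) where
  carrier := idealB M
  zero_mem' := ⟨fun _ => 0, fun _ => M.zero_mem, fun x => by
    simpa using (tendsto_const_nhds : Tendsto (fun _ : ℕ => (0:ℝ)) atTop (𝓝 0))⟩
  add_mem' := by
    rintro f g ⟨u, hu, hul⟩ ⟨v, hv, hvl⟩
    exact ⟨fun n => u n + v n, fun n => M.add_mem (hu n) (hv n),
      fun x => by simpa using (hul x).add (hvl x)⟩
  smul_mem' := by
    rintro r g ⟨u, hu, hul⟩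
    obtain ⟨v, hv⟩ := r.2
    refine ⟨fun n => (⟨v n, (v n).continuous⟩ : CFun X) * u n,
      fun n => M.mul_mem_left _ (hu n), fun x => ?_⟩
    have : Tendsto (fun n => v n x * (u n : X → ℝ) x) atTop
        (𝓝 ((r : X → ℝ) x * (g : X → ℝ) x)) := (hv x).mul (hul x)
    simpa using this

end AuxRealMax

theorem idealB_real_maximal {X : Type*} [TopologicalSpace X]
    (M : Ideal (CFun X)) (hM : IsRealMax M) :
    (∀ g : ℕ → B1 X, (∀ n, g n ∈ idealB M) →
        (⋂ n : ℕ, {x : X | (g n : X → ℝ) x = 0}).Nonempty) ∧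
      ∃ J : Ideal (B1 X), (↑J : Set (B1 X)) = idealB M ∧ IsRealMaxB J := by
  obtain ⟨hmax, ⟨e⟩⟩ := hM
  set φ : CFun X →+* ℝ := (e : CFun X ⧸ M ≃+* ℝ).toRingHom.comp (Ideal.Quotient.mk M)
    with hφdef
  have hker : ∀ f : CFun X, f ∈ M ↔ φ f = 0 := by
    intro f
    rw [hφdef]
    simp only [RingHom.comp_apply, RingEquiv.toRingHom_eq_coe, RingHom.coe_coe]
    rw [← map_zero e, EmbeddingLike.apply_eq_iff_eq]
    exact (Ideal.Quotient.eq_zero_iff_mem).symm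
  -- Part 1: countable intersection property
  have part1 : ∀ g : ℕ → B1 X, (∀ n, g n ∈ idealB M) →
      (⋂ n : ℕ, {x : X | (g n : X → ℝ) x = 0}).Nonempty := by
    intro g hg
    choose u hu hul using hg
    obtain ⟨x, hx⟩ := key φ (fun m => u m.unpair.1 m.unpair.2)
      (fun m => (hker _).1 (hu _ _))
    refine ⟨x, Set.mem_iInter.2 fun n => ?_⟩
    have hz : ∀ k, (u n k : X → ℝ) x = 0 := fun k => by
      have := hx (Nat.pair n k)
      simpa [Nat.unpair_pair] using this
    have htend : Tendsto (fun k => (u n k : X → ℝ) x) atTop (𝓝 ((g n : X → ℝ) x)) :=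
      hul n x
    have : Tendsto (fun k => (u n k : X → ℝ) x) atTop (𝓝 0) := by
      simpa [hz] using (tendsto_const_nhds : Tendsto (fun _ : ℕ => (0:ℝ)) atTop (𝓝 0))
    exact (tendsto_nhds_unique htend this : _)
  refine ⟨part1, JB M, rfl, ?_⟩
  -- Any member of the extended ideal has a zero
  have memzero : ∀ h : B1 X, h ∈ idealB M → ∃ x, (h : X → ℝ) x = 0 := by
    intro h hh
    obtain ⟨x, hx⟩ := part1 (fun _ => h) (fun _ => hh)
    exact ⟨x, (Set.mem_iInter.1 hx 0 : _)⟩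
  -- Existence of the value r
  have exists_r : ∀ g : B1 X, ∃ r : ℝ, g - constB1 r ∈ idealB M := by
    intro g
    obtain ⟨v, hv⟩ := g.2
    set w : ℕ → CFun X :=
      fun n => (⟨v n, (v n).continuous⟩ : CFun X) -
        constC X (φ (⟨v n, (v n).continuous⟩ : CFun X)) with hw
    have hφw : ∀ n, φ (w n) = 0 := fun n => by
      rw [hw]; simp [map_sub, phi_const]
    obtain ⟨x, hx⟩ := key φ w hφw
    have hvx : ∀ n, v n x = φ (⟨v n, (v n).continuous⟩ : CFun X) := fun n => by
      have := hx n
      have hco : (w n : X → ℝ) x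
          = v n x - φ (⟨v n, (v n).continuous⟩ : CFun X) := rfl
      rw [hco] at this
      linarith
    refine ⟨(g : X → ℝ) x, w, fun n => (hker _).2 (hφw n), fun y => ?_⟩
    have hco : ∀ n, (w n : X → ℝ) y = v n y - v n x := fun n => by
      have : (w n : X → ℝ) y = v n y - φ (⟨v n, (v n).continuous⟩ : CFun X) := rfl
      rw [this, hvx n]
    have hgoal : ((g - constB1 ((g : X → ℝ) x) : B1 X) : X → ℝ) y
        = (g : X → ℝ) y - (g : X → ℝ) x := rfl
    rw [hgoal]
    have := (hv y).sub (hv x)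
    simpa [hco] using this
  choose r hr using exists_r
  have huniq : ∀ (g : B1 X) (s : ℝ), g - constB1 s ∈ idealB M → r g = s := by
    intro g s hs
    have hdiff : constB1 (s - r g) = (g - constB1 (r g)) - (g - constB1 s) := by
      apply Subtype.ext; funext y
      show s - r g = ((g : X → ℝ) y - r g) - ((g : X → ℝ) y - s)
      ring
    have hmem : constB1 (s - r g) ∈ idealB M := by
      rw [hdiff]
      exact (JB M).sub_mem (hr g) hs
    obtain ⟨x, hx⟩ := memzero _ hmem
    have : s - r g = 0 := hx
    linarith
  have hconst_add : ∀ a b : ℝ, constB1 (a + b) = (constB1 a + constB1 b : B1 X) :=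
    fun a b => Subtype.ext rfl
  have hconst_mul : ∀ a b : ℝ, constB1 (a * b) = (constB1 a * constB1 b : B1 X) :=
    fun a b => Subtype.ext rfl
  have hconst_one : constB1 1 = (1 : B1 X) := Subtype.ext rfl
  have hconst_zero : constB1 0 = (0 : B1 X) := Subtype.ext rfl
  set Φ : B1 X →+* ℝ :=
    { toFun := r
      map_one' := huniq 1 1 (by rw [hconst_one, sub_self]; exact (JB M).zero_mem)
      map_mul' := by
        intro g h
        apply huniq
        have hid : g * h - constB1 (r g * r h)
            = g * (h - constB1 (r h)) + (g - constB1 (r g)) * constB1 (r h) := by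
          rw [hconst_mul, mul_sub, sub_mul, sub_add_sub_cancel]
        rw [hid]
        exact (JB M).add_mem ((JB M).mul_mem_left g (hr h))
          ((JB M).mul_mem_right (constB1 (r h)) (hr g))
      map_zero' := huniq 0 0 (by rw [hconst_zero, sub_self]; exact (JB M).zero_mem)
      map_add' := by
        intro g h
        apply huniq
        have hid : g + h - constB1 (r g + r h)
            = (g - constB1 (r g)) + (h - constB1 (r h)) := by
          rw [hconst_add, sub_add_sub_comm]
        rw [hid]
        exact (JB M).add_mem (hr g) (hr h) } with hΦdef
  have hΦapp : ∀ g, Φ g = r g := fun _ => rfl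
  have hΦconst : ∀ s : ℝ, Φ (constB1 s) = s := fun s =>
    huniq (constB1 s) s (by rw [sub_self]; exact (JB M).zero_mem)
  have hsurj : Function.Surjective Φ := fun s => ⟨constB1 s, hΦconst s⟩
  have hkerΦ : RingHom.ker Φ = JB M := by
    ext g
    constructor
    · intro hg
      have h0 : r g = 0 := hg
      have hmem := hr g
      rw [h0, hconst_zero, sub_zero] at hmem
      exact hmem
    · intro hg
      show r g = 0
      exact huniq g 0 (by rw [hconst_zero, sub_zero]; exact hg)
  constructor
  · rw [← hkerΦ]
    exact RingHom.ker_isMaximal_of_surjective Φ hsurj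
  · exact ⟨(Ideal.quotEquivOfEq hkerΦ.symm).trans
      (RingHom.quotientKerEquivOfSurjective hsurj)⟩
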